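/- Let V : [0,∞) → B(H) be a strongly continuous semigroup on a Hilbert space with V(0) = I, and let a > 0. Suppose B is a bounded operator satisfying −iB(I − zB)⁻¹ h = ∫₀ᵃ e^{izt} V(t) h dt for all h ∈ H and z ∈ ℂ. Then for every c > 0 there is M = M(c) > 0 such that ‖B(I − zB)⁻¹‖ ≤ M/(1 + |Im z|) for all z with Im z ≥ −c. -/

import Mathlib

open MeasureTheory intervalIntegral Set

theorem resolvent_decay_from_semigroup
    {H : Type*} [NormedAddCommGroup H] [InnerProductSpace ℂ H] [CompleteSpace H]
    (V : ℝ → (H →L[ℂ] H)) (hV0 : V 0 = 1)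
    (hVcont : ∀ h : H, ContinuousOn (fun t => V t h) (Set.Ici 0))
    (a : ℝ) (ha : 0 < a)
    (B : H →L[ℂ] H)
    (hrep : ∀ (h : H) (z : ℂ),
      (-Complex.I) • ((B * (Ring.inverse (1 - z • B))) h)
        = ∫ t in (0:ℝ)..a, Complex.exp (Complex.I * z * t) • V t h) :
    ∀ c : ℝ, 0 < c → ∃ M : ℝ, 0 < M ∧ ∀ z : ℂ, -c ≤ z.im →
      ‖B * (Ring.inverse (1 - z • B))‖ ≤ M / (1 + |z.im|) := by
  intro c hc
  -- uniform bound on ‖V t‖ on [0, a] via Banach–Steinhaus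
  obtain ⟨C₀, hC₀⟩ : ∃ C, ∀ t : Set.Icc (0:ℝ) a, ‖V t‖ ≤ C := by
    apply banach_steinhaus (g := fun t : Set.Icc (0:ℝ) a => V t)
    intro x
    obtain ⟨C, hC⟩ := (isCompact_Icc (a := (0:ℝ)) (b := a)).exists_bound_of_continuousOn
      ((hVcont x).mono Set.Icc_subset_Ici_self)
    exact ⟨C, fun t => hC t t.2⟩
  set C := max C₀ 1 with hCdef
  have hC1 : (1:ℝ) ≤ C := le_max_right _ _
  have hC0 : 0 < C := lt_of_lt_of_le one_pos hC1
  have hVb : ∀ t ∈ Set.Icc (0:ℝ) a, ‖V t‖ ≤ C := fun t ht =>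
    (hC₀ ⟨t, ht⟩).trans (le_max_left _ _)
  set K := max (a + 1) (a * Real.exp (c * a) * (1 + c)) with hKdef
  have hK0 : 0 < K := lt_of_lt_of_le (by linarith) (le_max_left _ _)
  refine ⟨C * K, by positivity, ?_⟩
  intro z hz
  set s := z.im with hs
  have h1s : 0 < 1 + |s| := by positivity
  -- the scalar integral
  set J : ℝ := ∫ t in (0:ℝ)..a, Real.exp (-s * t) with hJdef
  have hJnn : 0 ≤ J := intervalIntegral.integral_nonneg ha.le
    (fun t _ => (Real.exp_pos _).le)
  have hgint : IntervalIntegrable (fun t => Real.exp (-s * t)) volume 0 a :=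
    (Real.continuous_exp.comp (continuous_const.mul continuous_id)).intervalIntegrable _ _
  -- step 1 : operator norm bound
  have hT : ‖B * Ring.inverse (1 - z • B)‖ ≤ C * J := by
    apply ContinuousLinearMap.opNorm_le_bound _ (by positivity)
    intro h
    have h1 : ‖(B * Ring.inverse (1 - z • B)) h‖
        = ‖(-Complex.I) • ((B * Ring.inverse (1 - z • B)) h)‖ := by
      rw [norm_smul]; simp
    rw [h1, hrep h z]
    have hbound : ∀ᵐ (t : ℝ) ∂(volume.restrict (Set.uIoc (0:ℝ) a)),
        ‖Complex.exp (Complex.I * z * (t:ℂ)) • V t h‖ ≤ Real.exp (-s * t) * (C * ‖h‖) := by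
      rw [Set.uIoc_of_le ha.le]
      refine (MeasureTheory.ae_restrict_iff' measurableSet_Ioc).mpr (Filter.Eventually.of_forall ?_)
      intro t ht
      have ht' : t ∈ Set.Icc (0:ℝ) a := ⟨ht.1.le, ht.2⟩
      have hre : (Complex.I * z * (t:ℂ)).re = -s * t := by
        simp [Complex.mul_re, Complex.mul_im, hs]
      rw [norm_smul, Complex.norm_exp, hre]
      have : ‖(V t) h‖ ≤ C * ‖h‖ :=
        ((V t).le_opNorm h).trans (mul_le_mul_of_nonneg_right (hVb t ht') (norm_nonneg _))
      exact mul_le_mul_of_nonneg_left this (Real.exp_pos _).le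
    have hgint' : IntervalIntegrable (fun t => Real.exp (-s * t) * (C * ‖h‖)) volume 0 a :=
      hgint.mul_const _
    calc ‖∫ t in (0:ℝ)..a, Complex.exp (Complex.I * z * t) • V t h‖
        ≤ |∫ t in (0:ℝ)..a, Real.exp (-s * t) * (C * ‖h‖)| :=
          intervalIntegral.norm_integral_le_abs_of_norm_le hbound hgint'
      _ = |J * (C * ‖h‖)| := by rw [intervalIntegral.integral_mul_const]
      _ = J * (C * ‖h‖) := abs_of_nonneg (by positivity)
      _ = C * J * ‖h‖ := by ring
  -- step 2 : (1 + |s|) * J ≤ K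
  have hKey : (1 + |s|) * J ≤ K := by
    rcases le_or_gt 0 s with hs0 | hs0
    · -- s ≥ 0 : J ≤ a and s * J ≤ 1
      have hJa : J ≤ a := by
        have := intervalIntegral.norm_integral_le_of_norm_le_const_ae
          (a := 0) (b := a) (C := 1) (f := fun t => Real.exp (-s * t))
          (Filter.Eventually.of_forall (fun t ht => by
            rw [Set.uIoc_of_le ha.le] at ht
            rw [Real.norm_eq_abs, abs_of_pos (Real.exp_pos _)]
            exact Real.exp_le_one_iff.mpr (by nlinarith [ht.1.le])))
        calc J ≤ ‖J‖ := le_abs_self _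
          _ ≤ 1 * |a - 0| := this
          _ = a := by rw [one_mul, sub_zero, abs_of_pos ha]
      have hsJ : s * J ≤ 1 := by
        rcases eq_or_lt_of_le hs0 with h0 | h0
        · rw [← h0]; norm_num
        · have hJeq : J = (-s)⁻¹ * (Real.exp (-s * a) - 1) := by
            rw [hJdef, intervalIntegral.integral_comp_mul_left (fun x => Real.exp x)
              (neg_ne_zero.mpr h0.ne'), smul_eq_mul, mul_zero, integral_exp, Real.exp_zero]
          have hmul : s * J = 1 - Real.exp (-s * a) := by
            rw [hJeq]
            field_simp
            ring
          have := (Real.exp_pos (-s * a)).le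
          linarith
      have habs : |s| = s := abs_of_nonneg hs0
      calc (1 + |s|) * J = J + s * J := by rw [habs]; ring
        _ ≤ a + 1 := add_le_add hJa hsJ
        _ ≤ K := le_max_left _ _
    · -- -c ≤ s < 0
      have habs : |s| = -s := abs_of_neg hs0
      have hJb : J ≤ a * Real.exp (c * a) := by
        have := intervalIntegral.norm_integral_le_of_norm_le_const_ae
          (a := 0) (b := a) (C := Real.exp (c * a)) (f := fun t => Real.exp (-s * t))
          (Filter.Eventually.of_forall (fun t ht => by
            rw [Set.uIoc_of_le ha.le] at ht
            rw [Real.norm_eq_abs, abs_of_pos (Real.exp_pos _)]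
            apply Real.exp_le_exp.mpr
            have h1 : -s ≤ c := by linarith
            have h2 : 0 ≤ t := ht.1.le
            nlinarith [ht.2]))
        calc J ≤ ‖J‖ := le_abs_self _
          _ ≤ Real.exp (c * a) * |a - 0| := this
          _ = a * Real.exp (c * a) := by rw [sub_zero, abs_of_pos ha]; ring
      have h1c : 1 + |s| ≤ 1 + c := by rw [habs]; linarith
      calc (1 + |s|) * J ≤ (1 + c) * (a * Real.exp (c * a)) :=
            mul_le_mul h1c hJb hJnn (by linarith)
        _ = a * Real.exp (c * a) * (1 + c) := by ring
        _ ≤ K := le_max_right _ _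
  -- conclude
  rw [le_div_iff₀ h1s]
  calc ‖B * Ring.inverse (1 - z • B)‖ * (1 + |s|) ≤ (C * J) * (1 + |s|) :=
        mul_le_mul_of_nonneg_right hT h1s.le
    _ = C * ((1 + |s|) * J) := by ring
    _ ≤ C * K := mul_le_mul_of_nonneg_left hKey hC0.le
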